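/- With the cubic model m, the stepsize α̂ and the point ŝ = −α̂ g as defined, it holds that m(0) − m(ŝ) ≥ (1 − β) α̂ ‖g‖². -/

import Mathlib

open scoped RealInnerProductSpace

noncomputable section

/-- `U_I`: extension by zero from block coordinates to full coordinates. -/
def blockIncl {n : ℕ} (I : Finset (Fin n)) :
    EuclideanSpace ℝ ↥I →ₗ[ℝ] EuclideanSpace ℝ (Fin n) where
  toFun s := WithLp.toLp 2 (fun i => if h : i ∈ I then s ⟨i, h⟩ else 0)
  map_add' s t := by ext i; by_cases h : i ∈ I <;> simp [h]
  map_smul' c s := by ext i; by_cases h : i ∈ I <;> simp [h]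

/-- `U_Iᵀ`: restriction of a vector to the block coordinates. -/
def blockRestr {n : ℕ} (I : Finset (Fin n)) :
    EuclideanSpace ℝ (Fin n) →ₗ[ℝ] EuclideanSpace ℝ ↥I where
  toFun x := WithLp.toLp 2 (fun i => x i)
  map_add' x y := by ext i; simp
  map_smul' c x := by ext i; simp

/-- Block Hessian `U_Iᵀ H U_I` as a continuous linear map. -/
def blockHess {n : ℕ} (I : Finset (Fin n))
    (H : EuclideanSpace ℝ (Fin n) →L[ℝ] EuclideanSpace ℝ (Fin n)) :
    EuclideanSpace ℝ ↥I →L[ℝ] EuclideanSpace ℝ ↥I :=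
  LinearMap.toContinuousLinearMap
    ((blockRestr I) ∘ₗ ((H : EuclideanSpace ℝ (Fin n) →ₗ[ℝ] EuclideanSpace ℝ (Fin n)) ∘ₗ blockIncl I))

/-- Quadratic model `q(s) = f₀ + gᵀs + (1/2) sᵀ H s`. -/
def quadModel {E : Type*} [NormedAddCommGroup E] [InnerProductSpace ℝ E]
    (f₀ : ℝ) (g : E) (H : E →L[ℝ] E) (s : E) : ℝ :=
  f₀ + ⟪g, s⟫ + (1 / 2) * ⟪s, H s⟫

/-- Cubic model `m(s) = q(s) + (σ/6) ‖s‖³`. -/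
def cubicModel {E : Type*} [NormedAddCommGroup E] [InnerProductSpace ℝ E]
    (f₀ : ℝ) (g : E) (H : E →L[ℝ] E) (σ : ℝ) (s : E) : ℝ :=
  quadModel f₀ g H s + σ / 6 * ‖s‖ ^ 3

/-- Gradient of the cubic model: `∇m(s) = g + H s + (σ/2) ‖s‖ s`. -/
def cubicModelGrad {E : Type*} [NormedAddCommGroup E] [InnerProductSpace ℝ E]
    (g : E) (H : E →L[ℝ] E) (σ : ℝ) (s : E) : E :=
  g + H s + (σ / 2 * ‖s‖) • s

/-- The stepsize `α̂ = min{β/‖H‖, √(3β/(σ‖g‖))}`, the first argument being `+∞` if `H = 0`. -/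
def alphaHat {E : Type*} [NormedAddCommGroup E] [InnerProductSpace ℝ E]
    (β σ : ℝ) (g : E) (H : E →L[ℝ] E) : ℝ :=
  haveI := Classical.dec (H = 0)
  if H = 0 then Real.sqrt (3 * β / (σ * ‖g‖))
  else min (β / ‖H‖) (Real.sqrt (3 * β / (σ * ‖g‖)))

/-- The Cauchy-like point `ŝ = -α̂ g`. -/
def sHat {E : Type*} [NormedAddCommGroup E] [InnerProductSpace ℝ E]
    (β σ : ℝ) (g : E) (H : E →L[ℝ] E) : E :=
  -(alphaHat β σ g H) • g

theorem stmt5 (q : ℕ) (g : EuclideanSpace ℝ (Fin q)) (hg : g ≠ 0)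
    (H : EuclideanSpace ℝ (Fin q) →L[ℝ] EuclideanSpace ℝ (Fin q))
    (hH : ∀ u v, ⟪H u, v⟫ = ⟪u, H v⟫)
    (f₀ σ β : ℝ) (hσ : 0 < σ) (hβ0 : 0 < β) (hβ1 : β < 1) :
    (1 - β) * alphaHat β σ g H * ‖g‖ ^ 2 ≤
      cubicModel f₀ g H σ 0 - cubicModel f₀ g H σ (sHat β σ g H) := by
  set α := alphaHat β σ g H with hα
  have hgn : 0 < ‖g‖ := norm_pos_iff.mpr hg
  have hA2 : Real.sqrt (3 * β / (σ * ‖g‖)) ^ 2 = 3 * β / (σ * ‖g‖) := by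
    rw [Real.sq_sqrt]; positivity
  have hApos : 0 < Real.sqrt (3 * β / (σ * ‖g‖)) := Real.sqrt_pos.mpr (by positivity)
  have hαpos : 0 < α := by
    rw [hα, alphaHat]
    split
    · exact hApos
    · exact lt_min (div_pos hβ0 (norm_pos_iff.mpr (by assumption))) hApos
  have hαA : α ≤ Real.sqrt (3 * β / (σ * ‖g‖)) := by
    rw [hα, alphaHat]; split
    · exact le_refl _
    · exact min_le_right _ _
  -- key bound 1
  have h1 : α ^ 2 * ⟪g, H g⟫ ≤ β * α * ‖g‖ ^ 2 := by
    by_cases hH0 : H = 0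
    · simp [hH0]; positivity
    · have hαH : α ≤ β / ‖H‖ := by
        rw [hα, alphaHat]; rw [if_neg hH0]; exact min_le_left _ _
      have hHn : 0 < ‖H‖ := norm_pos_iff.mpr hH0
      have hb : ⟪g, H g⟫ ≤ ‖H‖ * ‖g‖ ^ 2 := by
        calc ⟪g, H g⟫ ≤ ‖g‖ * ‖H g‖ := real_inner_le_norm g (H g)
          _ ≤ ‖g‖ * (‖H‖ * ‖g‖) := by
              exact mul_le_mul_of_nonneg_left (H.le_opNorm g) (le_of_lt hgn)
          _ = ‖H‖ * ‖g‖ ^ 2 := by ring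
      have : α ^ 2 * ⟪g, H g⟫ ≤ α ^ 2 * (‖H‖ * ‖g‖ ^ 2) := by
        exact mul_le_mul_of_nonneg_left hb (by positivity)
      refine this.trans ?_
      have hb2 : α * ‖H‖ ≤ β := (le_div_iff₀ hHn).mp hαH
      nlinarith [mul_nonneg (sub_nonneg.mpr hb2) (mul_nonneg hαpos.le (sq_nonneg ‖g‖))]
  -- key bound 2
  have h2 : σ * α ^ 3 * ‖g‖ ^ 3 ≤ 3 * β * α * ‖g‖ ^ 2 := by
    have hα2 : α ^ 2 ≤ 3 * β / (σ * ‖g‖) := by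
      calc α ^ 2 ≤ Real.sqrt (3 * β / (σ * ‖g‖)) ^ 2 := by
            exact pow_le_pow_left₀ hαpos.le hαA 2
        _ = 3 * β / (σ * ‖g‖) := hA2
    have hc : σ * ‖g‖ * α ^ 2 ≤ 3 * β := by
      rw [le_div_iff₀ (by positivity)] at hα2; linarith
    nlinarith [mul_nonneg (sub_nonneg.mpr hc) (mul_nonneg hαpos.le (sq_nonneg ‖g‖))]
  -- expand the model
  have hnorm : ‖sHat β σ g H‖ = α * ‖g‖ := by
    rw [sHat, norm_smul, ← hα, norm_neg, Real.norm_eq_abs, abs_of_pos hαpos]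
  have hexp : cubicModel f₀ g H σ (sHat β σ g H) =
      f₀ - α * ‖g‖ ^ 2 + α ^ 2 / 2 * ⟪g, H g⟫ + σ / 6 * (α * ‖g‖) ^ 3 := by
    rw [cubicModel, quadModel, hnorm, sHat, ← hα]
    have e1 : ⟪g, -α • g⟫ = -α * ‖g‖ ^ 2 := by
      rw [real_inner_smul_right, real_inner_self_eq_norm_sq]
    have e2 : ⟪-α • g, H (-α • g)⟫ = α ^ 2 * ⟪g, H g⟫ := by
      rw [map_smul, real_inner_smul_left, real_inner_smul_right]; ring
    rw [e1, e2]; ring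
  have h0 : cubicModel f₀ g H σ 0 = f₀ := by
    simp [cubicModel, quadModel]
  rw [h0, hexp]
  nlinarith [h1, h2, mul_pos hαpos (mul_pos hgn hgn)]


end
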